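/- For a prime power q = p^α and any integer r, the binomial coefficient C(r-1, q-1) is divisible by p if and only if r is not divisible by q. -/

import Mathlib

open Finset in
lemma aux_period {p : ℕ} (hp : p.Prime) {α q : ℕ} (hq : q = p ^ α) {k : ℕ} (hk : k < q)
    (x : ℤ) : (p : ℤ) ∣ Ring.choose (x + q) k - Ring.choose x k := by
  rw [Ring.add_choose_eq k (Commute.all _ _),
    Finset.Nat.sum_antidiagonal_eq_sum_range_succ_mk, Finset.sum_range_succ]
  simp only [Nat.sub_self, Ring.choose_zero_right, mul_one, add_sub_cancel_right]
  apply Finset.dvd_sum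
  intro i hi
  have hi' := Finset.mem_range.mp hi
  rw [Ring.choose_natCast]
  subst hq
  exact Dvd.dvd.mul_left
    (Int.natCast_dvd_natCast.mpr (hp.dvd_choose_pow (by omega) (by omega))) _

lemma aux_period_mul {p : ℕ} (hp : p.Prime) {α q : ℕ} (hq : q = p ^ α) {k : ℕ} (hk : k < q)
    (x : ℤ) (t : ℤ) : (p : ℤ) ∣ Ring.choose (x + q * t) k - Ring.choose x k := by
  induction t using Int.induction_on with
  | zero => simp
  | succ n ih =>
    have h2 := aux_period hp hq hk (x + q * n)
    have : x + q * (n + 1) = (x + q * n) + q := by ring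
    rw [this]
    have := dvd_add h2 ih
    simpa using this
  | pred n ih =>
    have h2 := aux_period hp hq hk (x + q * (-n - 1))
    have heq : (x + q * (-n - 1)) + q = x + q * (-n : ℤ) := by ring
    rw [heq] at h2
    have := dvd_sub ih h2
    have heq2 : Ring.choose (x + ↑q * (-↑n : ℤ)) k - Ring.choose x k -
        (Ring.choose (x + ↑q * (-↑n : ℤ)) k - Ring.choose (x + ↑q * (-↑n - 1)) k)
        = Ring.choose (x + ↑q * (-(↑n + 1) : ℤ)) k - Ring.choose x k := by
      have : x + (q : ℤ) * (-(↑n + 1)) = x + q * (-↑n - 1) := by ring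
      rw [this]; ring
    rw [heq2] at this
    rwa [show x + (q:ℤ) * (-(n:ℤ) - 1) = x + (q:ℤ) * (-((n:ℤ) + 1)) from by ring]

theorem stmt0 (p α : ℕ) (hp : p.Prime) (hα : 1 ≤ α) (q : ℕ) (hq : q = p ^ α) (r : ℤ) :
    (p : ℤ) ∣ Ring.choose (r - 1) (q - 1) ↔ ¬ (q : ℤ) ∣ r := by
  have hq2 : 2 ≤ q := by
    rw [hq]
    calc 2 ≤ p := hp.two_le
    _ = p ^ 1 := (pow_one p).symm
    _ ≤ p ^ α := Nat.pow_le_pow_right hp.pos hα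
  have hqpos : (0 : ℤ) < (q : ℤ) := by exact_mod_cast Nat.lt_of_lt_of_le Nat.zero_lt_two hq2
  set m : ℤ := r % q with hm
  have hm0 : 0 ≤ m := Int.emod_nonneg r (by positivity)
  have hmq : m < q := Int.emod_lt_of_pos r hqpos
  have hr : r = m + q * (r / q) := by rw [hm]; exact (Int.emod_add_mul_ediv r q).symm
  have hper : (p : ℤ) ∣ Ring.choose (r - 1) (q - 1) - Ring.choose (m - 1) (q - 1) := by
    have := aux_period_mul hp hq (k := q - 1) (by omega) (m - 1) (r / q)
    have heq : m - 1 + (q : ℤ) * (r / q) = r - 1 := by omega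
    rwa [heq] at this
  have hdvd_iff : (q : ℤ) ∣ r ↔ m = 0 := Int.dvd_iff_emod_eq_zero
  rcases eq_or_ne m 0 with h0 | h0
  · -- r divisible by q: choose (-1) (q-1) = (-1)^(q-1), not divisible by p
    have hchoose : Ring.choose ((-1 : ℤ)) (q - 1) = (-1) ^ (q - 1) := by
      unfold Ring.choose
      have : (-1 : ℤ) - (q - 1 : ℕ) + 1 = -((q - 1 : ℕ) : ℤ) := by ring
      rw [this, Ring.multichoose_neg_self]
    rw [h0] at hper
    simp only [zero_sub] at hper
    rw [show (- 1 : ℤ) = (-1 : ℤ) from rfl, hchoose] at hper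
    constructor
    · intro hdvd
      exfalso
      have hdu : (p : ℤ) ∣ (-1 : ℤ) ^ (q - 1) := by
        have := dvd_sub hdvd hper
        simpa using this
      have hu : IsUnit ((-1 : ℤ) ^ (q - 1)) := (isUnit_one.neg).pow _
      have : IsUnit ((p : ℤ)) := isUnit_of_dvd_unit hdu hu
      rw [Int.isUnit_iff] at this
      have := hp.two_le
      omega
    · intro hndvd
      exact absurd (hdvd_iff.mpr h0) hndvd
  · -- r not divisible by q: 0 < m < q, choose (m-1) (q-1) = 0
    have hm1 : 0 < m := lt_of_le_of_ne hm0 (Ne.symm h0)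
    have hchoose0 : Ring.choose (m - 1) (q - 1) = 0 := by
      obtain ⟨n, hn⟩ : ∃ n : ℕ, m - 1 = (n : ℤ) ∧ n < q - 1 := by
        refine ⟨(m - 1).toNat, ?_, ?_⟩ <;> omega
      rw [hn.1, Ring.choose_natCast]
      rw [Nat.choose_eq_zero_of_lt hn.2, Nat.cast_zero]
    rw [hchoose0, sub_zero] at hper
    constructor
    · intro _
      rw [hdvd_iff]
      exact h0
    · intro _
      exact hper
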